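/- Let (X, A, f, α) be an invertible micro-macro dynamical system. Then for all a, b ∈ A, the detailed fluctuation relation T_{ab}(α) = e^{S(a) − S(b)} · T_{ba}(α⁻¹) holds. -/

import Mathlib

open Finset

/-- Detailed fluctuation relation: `T_{ab}(α) = e^{S(a)-S(b)} T_{ba}(α⁻¹)`. -/
theorem stmt9 {X A : Type*} [Fintype X] [DecidableEq A]
    (f : X → A) (hf : Function.Surjective f) (α : X ≃ X)
    (fib : A → ℕ) (hfib : ∀ a, fib a = (univ.filter (fun i => f i = a)).card)
    (S : A → ℝ) (hS : ∀ a, S a = Real.log (fib a))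
    (T : (X → X) → A → A → ℝ)
    (hT : ∀ (β : X → X) a b,
      T β a b = ((univ.filter (fun i => f i = b ∧ f (β i) = a)).card : ℝ) / fib b) :
    ∀ a b, T (⇑α) a b = Real.exp (S a - S b) * T (⇑α.symm) b a := by
  intro a b
  have hpos : ∀ c : A, 0 < (fib c : ℝ) := by
    intro c
    obtain ⟨x, hx⟩ := hf c
    have : x ∈ univ.filter (fun i => f i = c) := by simp [hx]
    have hc : 0 < (univ.filter (fun i => f i = c)).card := card_pos.mpr ⟨x, this⟩
    rw [hfib]; exact_mod_cast hc
  have hcard : (univ.filter (fun i => f i = b ∧ f (α i) = a)).card =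
      (univ.filter (fun i => f i = a ∧ f (α.symm i) = b)).card := by
    apply Finset.card_bij (fun i _ => α i)
    · intro i hi
      simp only [mem_filter, mem_univ, true_and] at hi ⊢
      exact ⟨hi.2, by simp [hi.1]⟩
    · intro i hi j hj hij
      exact α.injective hij
    · intro j hj
      simp only [mem_filter, mem_univ, true_and] at hj
      exact ⟨α.symm j, by simp [hj.1, hj.2], by simp⟩
  have hexp : Real.exp (S a - S b) = (fib a : ℝ) / fib b := by
    rw [hS, hS, Real.exp_sub, Real.exp_log (hpos a), Real.exp_log (hpos b)]
  rw [hT, hT, hcard, hexp]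
  field_simp
  rw [mul_comm ((fib b:ℝ)) ((fib a:ℝ)), mul_comm _ ((fib a:ℝ)), mul_div_mul_left _ _ (hpos a).ne']
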